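/- Let D be a decompressor mapping pairs of strings (or an ℓ-tuple oracle) to tuples, and let k = (k₁,...,k_ℓ) be an ℓ-tuple of integers. The set S of all ℓ-tuples x such that k satisfies the D-Slepian-Wolf constraints for x (i.e., C_D(x_J | x_{[ℓ]\J}) < Σ_{j∈J} k_j for every nonempty J ⊆ [ℓ]) has (2^{k₁},...,2^{k_ℓ})-small slices. -/

import Mathlib

/-- The set of `ℓ`-tuples `x` of binary strings such that the tuple `k` satisfies the
`D`-Slepian-Wolf constraints for `x`: for every nonempty `J ⊆ [ℓ]` there is a program `p`
of length less than `∑_{j ∈ J} k j` with `D p x_{[ℓ]\J} = x_J`. -/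
def SWset (ℓ : ℕ)
    (D : List Bool → (Fin ℓ → Option (List Bool)) → Option (Fin ℓ → Option (List Bool)))
    (k : Fin ℓ → ℕ) : Set (Fin ℓ → List Bool) :=
  {x | ∀ J : Finset (Fin ℓ), J.Nonempty →
    ∃ p : List Bool, p.length < ∑ j ∈ J, k j ∧
      D p (fun j => if j ∈ J then none else some (x j)) =
        some (fun j => if j ∈ J then some (x j) else none)}

lemma card_short_lt (m : ℕ) : Nat.card {l : List Bool | l.length < m} < 2 ^ m := by
  induction m with
  | zero =>
    have : {l : List Bool | l.length < 0} = ∅ := by ext l; simp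
    rw [this]; simp
  | succ m ih =>
    have hsplit : {l : List Bool | l.length < m + 1} =
        {l : List Bool | l.length < m} ∪ {l : List Bool | l.length = m} := by
      ext l; simp [Nat.lt_succ_iff_lt_or_eq, le_iff_lt_or_eq]
    have hcard_eq : Nat.card {l : List Bool | l.length = m} = 2 ^ m := by
      have e : {l : List Bool | l.length = m} ≃ List.Vector Bool m := Equiv.refl _
      rw [Nat.card_congr e, Nat.card_eq_fintype_card, card_vector]
      simp
    have h1 : ({l : List Bool | l.length < m}).Finite := List.finite_length_lt Bool m
    have h2 : ({l : List Bool | l.length = m}).Finite := List.finite_length_eq Bool m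
    have hle : Nat.card {l : List Bool | l.length < m + 1} ≤
        Nat.card {l : List Bool | l.length < m} + Nat.card {l : List Bool | l.length = m} := by
      rw [hsplit]
      have := Set.ncard_union_le {l : List Bool | l.length < m} {l : List Bool | l.length = m}
      simpa [Set.ncard] using this
    have := Nat.pow_succ 2 m
    omega

theorem stmt_11 (ℓ : ℕ)
    (D : List Bool → (Fin ℓ → Option (List Bool)) → Option (Fin ℓ → Option (List Bool)))
    (k : Fin ℓ → ℕ) (x : Fin ℓ → List Bool) (hx : x ∈ SWset ℓ D k)
    (J : Finset (Fin ℓ)) :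
    ({z ∈ SWset ℓ D k | ∀ j ∈ J, z j = x j}).Finite ∧
      Nat.card {z ∈ SWset ℓ D k | ∀ j ∈ J, z j = x j} ≤ ∏ j ∈ Jᶜ, 2 ^ k j := by
  set S : Set (Fin ℓ → List Bool) := {z ∈ SWset ℓ D k | ∀ j ∈ J, z j = x j} with hS
  by_cases hJc : Jᶜ.Nonempty
  · -- injection from S into short programs
    set m : ℕ := ∑ j ∈ Jᶜ, k j with hm
    set T : Set (List Bool) := {l : List Bool | l.length < m} with hT
    have hTfin : T.Finite := List.finite_length_lt Bool m
    haveI : Finite T := hTfin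
    -- for z ∈ S, the conditioning input is determined by x
    have hcond : ∀ z ∈ S, (fun j => if j ∈ Jᶜ then none else some (z j)) =
        (fun j => if j ∈ Jᶜ then none else some (x j)) := by
      intro z hz
      funext j
      by_cases hj : j ∈ Jᶜ
      · simp [hj]
      · simp only [hj, if_false]
        exact congrArg some (hz.2 j (Finset.notMem_compl.mp hj))
    have key : ∀ z : S, ∃ p : List Bool, p.length < m ∧
        D p (fun j => if j ∈ Jᶜ then none else some (x j)) =
          some (fun j => if j ∈ Jᶜ then some ((z : Fin ℓ → List Bool) j) else none) := by
      rintro ⟨z, hz⟩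
      obtain ⟨p, hp1, hp2⟩ := hz.1 Jᶜ hJc
      exact ⟨p, hp1, by rw [← hcond z hz]; exact hp2⟩
    choose f hf1 hf2 using key
    have finj : Function.Injective (fun z : S => (⟨f z, hf1 z⟩ : T)) := by
      intro z w hzw
      have hfz : f z = f w := congrArg Subtype.val hzw
      have : (fun j => if j ∈ Jᶜ then some ((z : Fin ℓ → List Bool) j) else none) =
          (fun j => if j ∈ Jᶜ then some ((w : Fin ℓ → List Bool) j) else none) := by
        have := (hf2 z).symm.trans (hfz ▸ hf2 w)
        exact Option.some_injective _ this
      apply Subtype.ext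
      funext j
      by_cases hj : j ∈ Jᶜ
      · have := congrFun this j
        simp only [hj, if_true] at this
        exact Option.some_injective _ this
      · rw [z.2.2 j (Finset.notMem_compl.mp hj), w.2.2 j (Finset.notMem_compl.mp hj)]
    haveI hSfin : Finite S := Finite.of_injective _ finj
    refine ⟨Set.toFinite S, ?_⟩
    calc Nat.card S ≤ Nat.card T := Nat.card_le_card_of_injective _ finj
      _ ≤ 2 ^ m := (card_short_lt m).le
      _ = ∏ j ∈ Jᶜ, 2 ^ k j := (Finset.prod_pow_eq_pow_sum Jᶜ k 2).symm
  · -- Jᶜ = ∅, so J = univ and S ⊆ {x}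
    have hsub : S ⊆ {x} := by
      intro z hz
      have : z = x := funext fun j => hz.2 j (by
        by_contra hj
        exact hJc ⟨j, Finset.mem_compl.mpr hj⟩)
      exact this
    have hfin : S.Finite := (Set.finite_singleton x).subset hsub
    refine ⟨hfin, ?_⟩
    have : Nat.card S ≤ Nat.card ({x} : Set (Fin ℓ → List Bool)) := by
      rw [Nat.card_coe_set_eq, Nat.card_coe_set_eq]
      exact Set.ncard_le_ncard hsub (Set.finite_singleton x)
    simp only [Nat.card_eq_fintype_card, Set.card_singleton] at this
    calc Nat.card S ≤ 1 := by simpa using this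
      _ ≤ ∏ j ∈ Jᶜ, 2 ^ k j := Finset.one_le_prod' (fun j _ => Nat.one_le_two_pow)
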